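/- Let π be a permutation of [n], let r ≥ 2, and let λ > 0 with 2nrλ < 1. Define the vector v indexed by permutations π′ of [n] whose entry at π′ is Σ_{j=0}^{r−1} (−1)^j · C(r−1, j) · ((j+1)λ)^{d_KT(π, π′)}, i.e., v = Σ_{j=0}^{r−1} (−1)^j C(r−1,j) Z_n((j+1)λ) v(M((j+1)λ, π)). Then ‖v‖₁ ≤ (2nrλ)^{r−1} / (1 − 2nrλ). -/

import Mathlib

open Finset

/-- Number of inversions of a permutation of `Fin n`. -/
def numInv {n : ℕ} (τ : Equiv.Perm (Fin n)) : ℕ :=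
  (Finset.univ.filter fun p : Fin n × Fin n => p.1 < p.2 ∧ τ p.2 < τ p.1).card

/-- Kendall-Tau distance between two permutations of `Fin n`. -/
def dKT {n : ℕ} (π π' : Equiv.Perm (Fin n)) : ℕ :=
  (Finset.univ.filter fun p : Fin n × Fin n =>
    p.1 < p.2 ∧ ¬((π p.1 < π p.2) ↔ (π' p.1 < π' p.2))).card

/-- The Mallows model probability of `σ`, with scaling parameter `φ` and center `c`. -/
noncomputable def mallows {n : ℕ} (φ : ℝ) (c : Equiv.Perm (Fin n)) (σ : Equiv.Perm (Fin n)) : ℝ :=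
  φ ^ dKT c σ / ∑ τ : Equiv.Perm (Fin n), φ ^ dKT c τ

/-- Total variation distance. -/
noncomputable def dTV {n : ℕ} (P Q : Equiv.Perm (Fin n) → ℝ) : ℝ :=
  (∑ σ : Equiv.Perm (Fin n), |P σ - Q σ|) / 2

@[simp] theorem Equiv.Perm.apply_inv_self {α : Type*} (f : Equiv.Perm α) (x : α) : f (f⁻¹ x) = x :=
  Equiv.apply_symm_apply f x

@[simp] theorem Equiv.Perm.inv_apply_self {α : Type*} (f : Equiv.Perm α) (x : α) : f⁻¹ (f x) = x :=
  Equiv.symm_apply_apply f x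

lemma alt_sum_pow_eq_zero : ∀ d m : ℕ, d < m →
    ∑ j ∈ Finset.range (m + 1), (-1 : ℝ) ^ j * (m.choose j : ℝ) * (j : ℝ) ^ d = 0 := by
  intro d
  induction d using Nat.strong_induction_on with
  | _ d IH =>
    intro m hdm
    match d with
    | 0 =>
      have h := Int.alternating_sum_range_choose_of_ne (n := m) (by omega)
      have h2 : ((∑ i ∈ range (m + 1), (-1 : ℤ) ^ i * (m.choose i : ℤ) : ℤ) : ℝ) = 0 := by
        rw [h]; norm_num
      push_cast at h2
      simpa using h2
    | (e + 1) =>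
      obtain ⟨k, rfl⟩ : ∃ k, m = k + 1 := ⟨m - 1, by omega⟩
      rw [Finset.sum_range_succ']
      have h0 : (-1 : ℝ) ^ 0 * (((k+1).choose 0 : ℕ) : ℝ) * ((0 : ℕ) : ℝ) ^ (e+1) = 0 := by
        norm_num
      rw [h0, add_zero]
      have key : ∀ i ∈ Finset.range (k + 1),
          (-1 : ℝ) ^ (i+1) * (((k+1).choose (i+1) : ℕ) : ℝ) * ((i+1 : ℕ) : ℝ) ^ (e+1)
          = -((k+1 : ℝ)) * ((-1 : ℝ) ^ i * (k.choose i : ℝ) * ((i:ℝ)+1) ^ e) := by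
        intro i _
        have hch : ((k:ℝ)+1) * (k.choose i : ℝ) = (((k+1).choose (i+1) : ℕ) : ℝ) * ((i:ℝ)+1) := by
          have h1 := Nat.add_one_mul_choose_eq k i
          have h2 : ((k.succ * k.choose i : ℕ) : ℝ) = ((k.succ.choose i.succ * i.succ : ℕ) : ℝ) := by
            rw [h1]
          push_cast at h2
          convert h2 using 2 <;> push_cast <;> ring
        push_cast
        linear_combination ((-1:ℝ)^i * ((i:ℝ)+1)^e) * hch
      rw [Finset.sum_congr rfl key, ← Finset.mul_sum]
      -- now expand ((i:ℝ)+1)^e by binomial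
      have binom : ∀ i : ℕ, ((i:ℝ)+1) ^ e = ∑ t ∈ Finset.range (e+1), (i:ℝ) ^ t * (e.choose t : ℝ) := by
        intro i
        have := add_pow (i:ℝ) 1 e
        simpa using this
      have expand : ∑ i ∈ Finset.range (k+1), (-1 : ℝ) ^ i * (k.choose i : ℝ) * ((i:ℝ)+1) ^ e
          = ∑ t ∈ Finset.range (e+1), (e.choose t : ℝ) *
              (∑ i ∈ Finset.range (k+1), (-1 : ℝ) ^ i * (k.choose i : ℝ) * (i:ℝ) ^ t) := by
        simp_rw [binom, Finset.mul_sum]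
        rw [Finset.sum_comm]
        refine Finset.sum_congr rfl fun t _ => ?_
        exact Finset.sum_congr rfl fun i _ => by ring
      rw [expand]
      have hz : ∀ t ∈ Finset.range (e+1), (e.choose t : ℝ) *
          (∑ i ∈ Finset.range (k+1), (-1 : ℝ) ^ i * (k.choose i : ℝ) * (i:ℝ) ^ t) = 0 := by
        intro t ht
        rw [Finset.mem_range] at ht
        rw [IH t (by omega) k (by omega), mul_zero]
      rw [Finset.sum_congr rfl hz]
      simp

lemma swap_lt {n : ℕ} {a b x y : Fin n} (hab : (b:ℕ) = (a:ℕ) + 1) (hxy : x < y)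
    (hne : ¬(x = a ∧ y = b)) : Equiv.swap a b x < Equiv.swap a b y := by
  rw [Equiv.swap_apply_def, Equiv.swap_apply_def]
  split_ifs <;> omega

lemma numInv_mul_swap {n : ℕ} (σ : Equiv.Perm (Fin n)) {a b : Fin n} (hab : (b:ℕ) = (a:ℕ) + 1)
    (hd : σ b < σ a) : numInv (σ * Equiv.swap a b) + 1 = numInv σ := by
  classical
  set s := Equiv.swap a b with hs
  have hab' : a < b := by omega
  have hA : (a, b) ∈ Finset.univ.filter
      (fun p : Fin n × Fin n => p.1 < p.2 ∧ σ p.2 < σ p.1) := by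
    simp [hab', hd]
  have hss : ∀ x : Fin n, s (s x) = x := fun x => Equiv.swap_apply_self a b x
  have hcard : (Finset.univ.filter fun p : Fin n × Fin n =>
        p.1 < p.2 ∧ (σ * s) p.2 < (σ * s) p.1).card
      = ((Finset.univ.filter fun p : Fin n × Fin n =>
        p.1 < p.2 ∧ σ p.2 < σ p.1).erase (a, b)).card := by
    apply Finset.card_nbij' (fun p => (s p.1, s p.2)) (fun q => (s q.1, s q.2))
    · intro p hp
      rw [Finset.mem_coe, Finset.mem_filter] at hp
      simp only [Finset.mem_coe, Finset.mem_filter, Finset.mem_univ, true_and, Equiv.Perm.mul_apply] at hp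
      obtain ⟨h1, h2⟩ := hp
      have hpne : ¬(p.1 = a ∧ p.2 = b) := by
        rintro ⟨ha, hb⟩
        rw [ha, hb] at h2
        rw [Equiv.swap_apply_left, Equiv.swap_apply_right] at h2
        exact absurd hd (not_lt.2 (le_of_lt h2))
      refine Finset.mem_erase.2 ⟨?_, ?_⟩
      · intro hq
        have h1' : s p.1 = a := congrArg Prod.fst hq
        have h2' : s p.2 = b := congrArg Prod.snd hq
        have : p.1 = s a := by rw [← h1', hss]
        have hb' : p.2 = s b := by rw [← h2', hss]
        rw [Equiv.swap_apply_left] at this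
        rw [Equiv.swap_apply_right] at hb'
        rw [this, hb'] at h1
        omega
      · simp only [Finset.mem_coe, Finset.mem_filter, Finset.mem_univ, true_and]
        exact ⟨swap_lt hab h1 hpne, h2⟩
    · intro q hq
      rw [Finset.mem_coe, Finset.mem_erase] at hq
      obtain ⟨hne, hq⟩ := hq
      simp only [Finset.mem_filter, Finset.mem_univ, true_and] at hq
      obtain ⟨h1, h2⟩ := hq
      have hqne : ¬(q.1 = a ∧ q.2 = b) := by
        rintro ⟨ha, hb⟩
        exact hne (Prod.ext ha hb)
      rw [Finset.mem_coe, Finset.mem_filter]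
      simp only [Finset.mem_coe, Finset.mem_filter, Finset.mem_univ, true_and, Equiv.Perm.mul_apply]
      exact ⟨swap_lt hab h1 hqne, by rw [hss, hss]; exact h2⟩
    · intro p _; exact Prod.ext (hss p.1) (hss p.2)
    · intro q _; exact Prod.ext (hss q.1) (hss q.2)
  unfold numInv
  rw [hcard, Finset.card_erase_of_mem hA]
  have : 0 < (Finset.univ.filter fun p : Fin n × Fin n =>
      p.1 < p.2 ∧ σ p.2 < σ p.1).card := Finset.card_pos.2 ⟨(a,b), hA⟩
  omega

lemma strictMono_perm_eq_one {n : ℕ} (σ : Equiv.Perm (Fin n)) (hmono : StrictMono σ) :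
    σ = 1 := by
  have hmono' : StrictMono (σ⁻¹ : Equiv.Perm (Fin n)) := by
    intro x y hxy
    rcases lt_trichotomy (σ⁻¹ x) (σ⁻¹ y) with h' | h' | h'
    · exact h'
    · exact absurd (congrArg σ h') (by
        rw [Equiv.Perm.apply_inv_self, Equiv.Perm.apply_inv_self]
        exact fun he => (ne_of_lt hxy) he)
    · have := hmono h'
      rw [Equiv.Perm.apply_inv_self, Equiv.Perm.apply_inv_self] at this
      exact absurd hxy (not_lt.2 (le_of_lt this))
  have le1 : ∀ (f : Equiv.Perm (Fin n)), StrictMono f → ∀ k : ℕ, ∀ hk : k < n,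
      k ≤ (f ⟨k, hk⟩ : ℕ) := by
    intro f hf k
    induction k with
    | zero => intro hk; exact Nat.zero_le _
    | succ m ih =>
      intro hk
      have hm : m < n := by omega
      have hlt : (⟨m, hm⟩ : Fin n) < ⟨m+1, hk⟩ := by simp [Fin.lt_def]
      have h3 := hf hlt
      have h2 := ih hm
      rw [Fin.lt_def] at h3
      omega
  ext x
  have h1 := le1 σ hmono (x:ℕ) x.2
  have h2 := le1 σ⁻¹ hmono' ((σ x) : ℕ) (σ x).2
  simp only [Fin.eta] at h1 h2
  rw [Equiv.Perm.inv_apply_self] at h2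
  simp only [Equiv.Perm.coe_one, id_eq]
  omega

lemma numInv_eq_zero_iff {n : ℕ} (σ : Equiv.Perm (Fin n)) : numInv σ = 0 ↔ σ = 1 := by
  constructor
  · intro h
    apply strictMono_perm_eq_one
    intro x y hxy
    by_contra hc
    have hne : σ x ≠ σ y := fun he => (ne_of_lt hxy) (σ.injective he)
    have hlt : σ y < σ x := lt_of_le_of_ne (not_lt.1 hc) (Ne.symm hne)
    have hmem : (x, y) ∈ Finset.univ.filter
        (fun p : Fin n × Fin n => p.1 < p.2 ∧ σ p.2 < σ p.1) := by simp [hxy, hlt]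
    rw [numInv, Finset.card_eq_zero] at h
    simp [h] at hmem
  · intro h
    rw [h, numInv, Finset.card_eq_zero, Finset.filter_eq_empty_iff]
    intro p _
    simp only [Equiv.Perm.coe_one, id_eq]
    intro ⟨h1, h2⟩
    omega

lemma exists_descent {n : ℕ} (σ : Equiv.Perm (Fin n)) (h : numInv σ ≠ 0) :
    ∃ p : Fin n × Fin n, (p.2:ℕ) = (p.1:ℕ) + 1 ∧ σ p.2 < σ p.1 := by
  by_contra hc
  push_neg at hc
  apply h
  rw [numInv_eq_zero_iff]
  apply strictMono_perm_eq_one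
  rcases n with _ | m
  · intro x; exact absurd x.2 (by omega)
  · rw [Fin.strictMono_iff_lt_succ]
    intro i
    have hcc := hc (i.castSucc, i.succ) (by simp)
    dsimp only at hcc
    have hne : σ i.succ ≠ σ i.castSucc := fun he => by
      have h2 := congrArg Fin.val (σ.injective he)
      simp at h2
    exact lt_of_le_of_ne hcc (Ne.symm hne)

lemma card_numInv_le (n d : ℕ) :
    ((Finset.univ : Finset (Equiv.Perm (Fin n))).filter (fun σ => numInv σ = d)).card ≤ n ^ d := by
  classical
  induction d with
  | zero =>
    have hsub : ((Finset.univ : Finset (Equiv.Perm (Fin n))).filter (fun σ => numInv σ = 0))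
        ⊆ {1} := by
      intro σ hσ
      rw [Finset.mem_filter] at hσ
      rw [Finset.mem_singleton]
      exact (numInv_eq_zero_iff σ).1 hσ.2
    simpa using Finset.card_le_card hsub
  | succ d ih =>
    rcases n with _ | m
    · have hempty : ((Finset.univ : Finset (Equiv.Perm (Fin 0))).filter
          (fun σ => numInv σ = d + 1)) = ∅ := by
        rw [Finset.filter_eq_empty_iff]
        intro σ _
        have h0 : numInv σ = 0 := (numInv_eq_zero_iff σ).2 (Subsingleton.elim σ 1)
        omega
      rw [hempty]
      simp
    · have key : ∀ σ : Equiv.Perm (Fin (m+1)), numInv σ = d + 1 →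
          ∃ p : Fin (m+1) × Fin (m+1), (p.2:ℕ) = (p.1:ℕ) + 1 ∧ σ p.2 < σ p.1 :=
        fun σ h => exists_descent σ (ne_of_eq_of_ne h (Nat.succ_ne_zero d))
      set F : Equiv.Perm (Fin (m+1)) → Fin (m+1) × Equiv.Perm (Fin (m+1)) := fun σ =>
        if h : numInv σ = d + 1 then
          ((key σ h).choose.1, σ * Equiv.swap (key σ h).choose.1 (key σ h).choose.2)
        else (1, 1) with hF
      have hmaps : ∀ σ ∈ (Finset.univ : Finset (Equiv.Perm (Fin (m+1)))).filter
          (fun σ => numInv σ = d + 1),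
          F σ ∈ (Finset.univ : Finset (Fin (m+1))) ×ˢ
            ((Finset.univ : Finset (Equiv.Perm (Fin (m+1)))).filter (fun σ => numInv σ = d)) := by
        intro σ hσ
        rw [Finset.mem_filter] at hσ
        have h := hσ.2
        rw [hF]
        simp only [dif_pos h]
        rw [Finset.mem_product]
        dsimp only
        refine ⟨Finset.mem_univ _, Finset.mem_filter.2 ⟨Finset.mem_univ _, ?_⟩⟩
        obtain ⟨hab, hd⟩ := (key σ h).choose_spec
        have := numInv_mul_swap σ hab hd
        omega
      have hinj : Set.InjOn F ((Finset.univ : Finset (Equiv.Perm (Fin (m+1)))).filter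
          (fun σ => numInv σ = d + 1)) := by
        intro σ1 h1 σ2 h2 heq
        simp only [Finset.coe_filter, Set.mem_setOf_eq] at h1 h2
        rw [hF] at heq
        simp only [dif_pos h1.2, dif_pos h2.2] at heq
        rw [Prod.mk.injEq] at heq
        obtain ⟨hfst, hsnd⟩ := heq
        have hsnd2 : (key σ1 h1.2).choose.2 = (key σ2 h2.2).choose.2 := by
          apply Fin.ext
          rw [(key σ1 h1.2).choose_spec.1, (key σ2 h2.2).choose_spec.1, hfst]
        rw [hfst, hsnd2] at hsnd
        exact mul_right_cancel hsnd
      have hle := Finset.card_le_card_of_injOn F hmaps hinj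
      rw [Finset.card_product] at hle
      refine le_trans hle ?_
      rw [Finset.card_univ, Fintype.card_fin, pow_succ]
      rw [mul_comm ((m+1 : ℕ) ^ d) (m+1)]
      exact Nat.mul_le_mul_left (m+1) ih

lemma dKT_eq_numInv {n : ℕ} (π π' : Equiv.Perm (Fin n)) :
    dKT π π' = numInv (π' * π⁻¹) := by
  classical
  have hlt : ∀ (f : Equiv.Perm (Fin n)) (x y : Fin n), x ≠ y → ¬ f x < f y → f y < f x := by
    intro f x y hxy h
    rcases lt_trichotomy (f x) (f y) with h' | h' | h'
    · exact absurd h' h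
    · exact absurd (f.injective h') hxy
    · exact h'
  unfold dKT numInv
  apply Finset.card_nbij'
    (i := fun p => if π p.1 < π p.2 then (π p.1, π p.2) else (π p.2, π p.1))
    (j := fun q => if π⁻¹ q.1 < π⁻¹ q.2 then (π⁻¹ q.1, π⁻¹ q.2) else (π⁻¹ q.2, π⁻¹ q.1))
  · intro p hp
    simp only [Finset.mem_coe, Finset.mem_filter, Finset.mem_univ, true_and] at hp ⊢
    obtain ⟨h1, h2⟩ := hp
    have hne : p.1 ≠ p.2 := ne_of_lt h1
    by_cases hc : π p.1 < π p.2
    · rw [if_pos hc]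
      dsimp only
      refine ⟨hc, ?_⟩
      have h3 : ¬ π' p.1 < π' p.2 := fun hx => h2 ⟨fun _ => hx, fun _ => hc⟩
      have h4 : π' p.2 < π' p.1 := hlt π' p.1 p.2 hne h3
      simpa [Equiv.Perm.mul_apply, Equiv.Perm.inv_apply_self] using h4
    · rw [if_neg hc]
      dsimp only
      have hc' : π p.2 < π p.1 := hlt π p.1 p.2 hne hc
      refine ⟨hc', ?_⟩
      have h3 : π' p.1 < π' p.2 := by
        by_contra h4
        exact h2 ⟨fun hx => absurd hx hc, fun hx => absurd hx h4⟩
      simpa [Equiv.Perm.mul_apply, Equiv.Perm.inv_apply_self] using h3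
  · intro q hq
    rw [Finset.mem_coe, Finset.mem_filter] at hq
    simp only [Finset.mem_coe, Finset.mem_filter, Finset.mem_univ, true_and, Equiv.Perm.mul_apply] at hq ⊢
    obtain ⟨h1, h2⟩ := hq
    have hne : π⁻¹ q.1 ≠ π⁻¹ q.2 := fun he => (ne_of_lt h1) (by
      have := congrArg π he
      rwa [Equiv.Perm.apply_inv_self, Equiv.Perm.apply_inv_self] at this)
    by_cases hc : π⁻¹ q.1 < π⁻¹ q.2
    · rw [if_pos hc]
      dsimp only
      refine ⟨hc, ?_⟩
      rw [Equiv.Perm.apply_inv_self, Equiv.Perm.apply_inv_self]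
      intro hiff
      have := hiff.1 h1
      exact absurd this (not_lt.2 (le_of_lt h2))
    · rw [if_neg hc]
      dsimp only
      have hc' : π⁻¹ q.2 < π⁻¹ q.1 := hlt π⁻¹ q.1 q.2 (ne_of_lt h1) hc
      refine ⟨hc', ?_⟩
      rw [Equiv.Perm.apply_inv_self, Equiv.Perm.apply_inv_self]
      intro hiff
      have hq21 : ¬ q.2 < q.1 := not_lt.2 (le_of_lt h1)
      exact hq21 (hiff.2 h2)
  · intro p hp
    simp only [Finset.mem_coe, Finset.mem_filter, Finset.mem_univ, true_and] at hp
    obtain ⟨h1, _⟩ := hp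
    dsimp only
    by_cases hc : π p.1 < π p.2
    · rw [if_pos hc]
      dsimp only
      rw [Equiv.Perm.inv_apply_self, Equiv.Perm.inv_apply_self, if_pos h1]
    · rw [if_neg hc]
      dsimp only
      rw [Equiv.Perm.inv_apply_self, Equiv.Perm.inv_apply_self,
        if_neg (not_lt.2 (le_of_lt h1))]
  · intro q hq
    simp only [Finset.mem_coe, Finset.mem_filter, Finset.mem_univ, true_and] at hq
    obtain ⟨h1, _⟩ := hq
    dsimp only
    by_cases hc : π⁻¹ q.1 < π⁻¹ q.2
    · rw [if_pos hc]
      dsimp only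
      rw [Equiv.Perm.apply_inv_self, Equiv.Perm.apply_inv_self, if_pos h1]
    · rw [if_neg hc]
      dsimp only
      rw [Equiv.Perm.apply_inv_self, Equiv.Perm.apply_inv_self,
        if_neg (not_lt.2 (le_of_lt h1))]

lemma alt_sum_succ_pow (k d : ℕ) (h : d < k) :
    ∑ j ∈ Finset.range (k+1), (-1:ℝ)^j * (k.choose j : ℝ) * ((j:ℝ)+1)^d = 0 := by
  have binom : ∀ j : ℕ, ((j:ℝ)+1)^d
      = ∑ t ∈ Finset.range (d+1), (j:ℝ)^t * (d.choose t : ℝ) := fun j => by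
    simpa using add_pow (j:ℝ) 1 d
  simp_rw [binom, Finset.mul_sum]
  rw [Finset.sum_comm]
  refine Finset.sum_eq_zero fun t ht => ?_
  rw [Finset.mem_range] at ht
  have h0 := alt_sum_pow_eq_zero t k (by omega)
  have : ∀ j ∈ Finset.range (k+1),
      (-1:ℝ)^j * (k.choose j : ℝ) * ((j:ℝ)^t * (d.choose t : ℝ))
      = ((-1:ℝ)^j * (k.choose j : ℝ) * (j:ℝ)^t) * (d.choose t : ℝ) :=
    fun j _ => by ring
  rw [Finset.sum_congr rfl this, ← Finset.sum_mul, h0, zero_mul]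

lemma inner_vanish (k d : ℕ) (h : d < k) (lam : ℝ) :
    ∑ j ∈ Finset.range (k+1), (-1:ℝ)^j * (k.choose j : ℝ) * (((j:ℝ)+1)*lam)^d = 0 := by
  have : ∀ j ∈ Finset.range (k+1),
      (-1:ℝ)^j * (k.choose j : ℝ) * (((j:ℝ)+1)*lam)^d
      = ((-1:ℝ)^j * (k.choose j : ℝ) * ((j:ℝ)+1)^d) * lam^d := fun j _ => by
    rw [mul_pow]; ring
  rw [Finset.sum_congr rfl this, ← Finset.sum_mul, alt_sum_succ_pow k d h, zero_mul]

lemma inner_bound (k d : ℕ) (lam : ℝ) (hlam : 0 ≤ lam) :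
    |∑ j ∈ Finset.range (k+1), (-1:ℝ)^j * (k.choose j : ℝ) * (((j:ℝ)+1)*lam)^d|
      ≤ 2^k * (((k:ℝ)+1)*lam)^d := by
  refine le_trans (Finset.abs_sum_le_sum_abs _ _) ?_
  have hterm : ∀ j ∈ Finset.range (k+1),
      |(-1:ℝ)^j * (k.choose j : ℝ) * (((j:ℝ)+1)*lam)^d|
      ≤ (k.choose j : ℝ) * (((k:ℝ)+1)*lam)^d := by
    intro j hj
    rw [Finset.mem_range] at hj
    have h1 : 0 ≤ ((j:ℝ)+1)*lam := by positivity
    have h2 : ((j:ℝ)+1)*lam ≤ ((k:ℝ)+1)*lam := by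
      have : (j:ℝ) ≤ (k:ℝ) := by exact_mod_cast Nat.lt_succ_iff.1 hj
      nlinarith
    rw [abs_mul, abs_mul, abs_pow, abs_pow, abs_neg, abs_one, one_pow, one_mul,
      Nat.abs_cast, abs_of_nonneg h1]
    exact mul_le_mul_of_nonneg_left (pow_le_pow_left₀ h1 h2 d) (Nat.cast_nonneg _)
  refine le_trans (Finset.sum_le_sum hterm) ?_
  rw [← Finset.sum_mul]
  have hch : (∑ j ∈ Finset.range (k+1), (k.choose j : ℝ)) = 2^k := by
    have := Nat.sum_range_choose k
    exact_mod_cast congrArg (Nat.cast : ℕ → ℝ) this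
  rw [hch]

lemma geom_tail_le (x : ℝ) (hx0 : 0 ≤ x) (hx1 : x < 1) (N : ℕ) :
    ∑ t ∈ Finset.range N, x ^ t ≤ 1 / (1 - x) := by
  have h1x : 0 < 1 - x := by linarith
  rw [geom_sum_eq (ne_of_lt hx1) N]
  rw [show x ^ N - 1 = -(1 - x^N) by ring, show x - 1 = -(1-x) by ring, neg_div_neg_eq]
  exact (div_le_div_iff_of_pos_right h1x).2 (by nlinarith [pow_nonneg hx0 N])

/-- **Claim inside Lemma 6.1 of Liu–Moitra.** Let `π` be a permutation of `[n]`, `r ≥ 2`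
and `λ > 0` with `2nrλ < 1`. The vector `v` indexed by permutations `π'` of `[n]`, whose
entry at `π'` is `Σ_{j=0}^{r-1} (-1)^j C(r-1, j) ((j+1)λ)^{d_KT(π, π')}` — that is,
`v = Σ_j (-1)^j C(r-1,j) Z_n((j+1)λ) v(M((j+1)λ, π))` — has
`‖v‖₁ ≤ (2nrλ)^{r-1}/(1 - 2nrλ)`. -/
theorem alternating_combination_l1_bound (n r : ℕ) (hr : 2 ≤ r)
    (π : Equiv.Perm (Fin n)) (lam : ℝ) (hlam : 0 < lam)
    (hbound : 2 * (n : ℝ) * r * lam < 1) :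
    ∑ π' : Equiv.Perm (Fin n),
        |∑ j ∈ Finset.range r,
          (-1 : ℝ) ^ j * ((r - 1).choose j : ℝ) * (((j : ℝ) + 1) * lam) ^ dKT π π'|
      ≤ (2 * (n : ℝ) * r * lam) ^ (r - 1) / (1 - 2 * (n : ℝ) * r * lam) := by
  classical
  set k := r - 1 with hk
  have hrk : r = k + 1 := by omega
  have hk1 : 1 ≤ k := by omega
  set x : ℝ := 2 * (n : ℝ) * r * lam with hxdef
  have hx0 : 0 ≤ x := by
    rw [hxdef]; positivity
  have hx1 : x < 1 := hbound
  set g : ℕ → ℝ := fun d =>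
    |∑ j ∈ Finset.range r, (-1 : ℝ) ^ j * ((r - 1).choose j : ℝ) * (((j : ℝ) + 1) * lam) ^ d|
    with hgdef
  have hgnonneg : ∀ d, 0 ≤ g d := fun d => abs_nonneg _
  -- vanishing
  have hgzero : ∀ d, d < k → g d = 0 := by
    intro d hd
    rw [hgdef]
    have := inner_vanish k d hd lam
    rw [hrk] at *
    simp only [Nat.add_sub_cancel]
    rw [this]
    exact abs_zero
  -- bound
  have hgbound : ∀ d, g d ≤ 2^k * (((r:ℝ))*lam)^d := by
    intro d
    have := inner_bound k d lam (le_of_lt hlam)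
    have hcast : ((r:ℝ)) = (k:ℝ) + 1 := by rw [hrk]; push_cast; ring
    rw [hgdef]
    rw [hcast]
    rw [hrk]
    simpa only [Nat.add_sub_cancel] using this
  -- reindex the sum
  have step1 : (∑ π' : Equiv.Perm (Fin n), g (dKT π π'))
      = ∑ σ : Equiv.Perm (Fin n), g (numInv σ) := by
    refine (Fintype.sum_equiv (Equiv.mulRight π) _ _ fun σ => ?_).symm
    have : dKT π (σ * π) = numInv σ := by
      rw [dKT_eq_numInv π (σ * π), mul_inv_cancel_right]
    rw [Equiv.coe_mulRight, this]
  -- fiberwise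
  set M := n * n + 1 with hM
  have hmaps : ∀ σ ∈ (Finset.univ : Finset (Equiv.Perm (Fin n))), numInv σ ∈ Finset.range M := by
    intro σ _
    rw [Finset.mem_range, hM]
    have h1 : numInv σ ≤ (Finset.univ : Finset (Fin n × Fin n)).card := Finset.card_filter_le _ _
    rw [Finset.card_univ, Fintype.card_prod, Fintype.card_fin] at h1
    omega
  have step2 : (∑ σ : Equiv.Perm (Fin n), g (numInv σ))
      = ∑ d ∈ Finset.range M, ∑ σ ∈ (Finset.univ : Finset (Equiv.Perm (Fin n))).filter
          (fun σ => numInv σ = d), g (numInv σ) :=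
    (Finset.sum_fiberwise_of_maps_to hmaps _).symm
  -- bound each fiber
  have step3 : ∀ d ∈ Finset.range M,
      (∑ σ ∈ (Finset.univ : Finset (Equiv.Perm (Fin n))).filter (fun σ => numInv σ = d),
        g (numInv σ)) ≤ (if k ≤ d then x ^ d else 0) := by
    intro d _
    have hfix : ∀ σ ∈ (Finset.univ : Finset (Equiv.Perm (Fin n))).filter
        (fun σ => numInv σ = d), g (numInv σ) = g d := by
      intro σ hσ
      rw [Finset.mem_filter] at hσ
      rw [hσ.2]
    rw [Finset.sum_congr rfl hfix, Finset.sum_const, nsmul_eq_mul]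
    by_cases hd : k ≤ d
    · rw [if_pos hd]
      have hcard : ((Finset.univ.filter (fun σ : Equiv.Perm (Fin n) => numInv σ = d)).card : ℝ)
          ≤ (n : ℝ) ^ d := by exact_mod_cast card_numInv_le n d
      have h2 : g d ≤ 2^k * ((r:ℝ)*lam)^d := hgbound d
      have h3 : (2:ℝ)^k ≤ 2^d := pow_le_pow_right₀ one_le_two hd
      have hrl : (0:ℝ) ≤ (r:ℝ)*lam := by positivity
      calc ((Finset.univ.filter (fun σ : Equiv.Perm (Fin n) => numInv σ = d)).card : ℝ) * g d
          ≤ (n:ℝ)^d * (2^k * ((r:ℝ)*lam)^d) := by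
            apply mul_le_mul hcard h2 (hgnonneg d) (by positivity)
        _ ≤ (n:ℝ)^d * (2^d * ((r:ℝ)*lam)^d) := by
            apply mul_le_mul_of_nonneg_left ?_ (by positivity)
            apply mul_le_mul_of_nonneg_right h3 (by positivity)
        _ = x ^ d := by
            rw [hxdef, show (2 * (n:ℝ) * r * lam) = 2 * ((n:ℝ) * ((r:ℝ)*lam)) by ring,
              mul_pow, mul_pow]
            ring
    · rw [if_neg hd]
      rw [hgzero d (by omega), mul_zero]
  -- sum the tail
  have step4 : (∑ d ∈ Finset.range M, (if k ≤ d then x ^ d else 0)) ≤ x ^ k / (1 - x) := by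
    rw [← Finset.sum_filter]
    have hIco : (Finset.range M).filter (fun d => k ≤ d) = Finset.Ico k M := by
      ext d
      simp only [Finset.mem_filter, Finset.mem_range, Finset.mem_Ico]
      omega
    rw [hIco, Finset.sum_Ico_eq_sum_range]
    have : ∀ t ∈ Finset.range (M - k), x ^ (k + t) = x ^ k * x ^ t := fun t _ => pow_add x k t
    rw [Finset.sum_congr rfl this, ← Finset.mul_sum]
    have := geom_tail_le x hx0 hx1 (M - k)
    calc x ^ k * ∑ t ∈ Finset.range (M - k), x ^ t
        ≤ x ^ k * (1 / (1 - x)) := by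
          apply mul_le_mul_of_nonneg_left this (pow_nonneg hx0 k)
      _ = x ^ k / (1 - x) := by ring
  calc ∑ π' : Equiv.Perm (Fin n),
        |∑ j ∈ Finset.range r,
          (-1 : ℝ) ^ j * ((r - 1).choose j : ℝ) * (((j : ℝ) + 1) * lam) ^ dKT π π'|
      = ∑ σ : Equiv.Perm (Fin n), g (numInv σ) := step1
    _ = ∑ d ∈ Finset.range M, ∑ σ ∈ (Finset.univ : Finset (Equiv.Perm (Fin n))).filter
          (fun σ => numInv σ = d), g (numInv σ) := step2
    _ ≤ ∑ d ∈ Finset.range M, (if k ≤ d then x ^ d else 0) := Finset.sum_le_sum step3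
    _ ≤ x ^ k / (1 - x) := step4
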